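/- The map f : I_n → I_{n-1} × {0,1} defined by f(w) = (π(w), 0) if the letter n does not occur in w, and f(w) = (π(w), 1) if n occurs in w, where π(w) deletes the letter n from w, is a surjective rank-preserving order-preserving map of posets. -/

import Mathlib

/-- Injective words over the alphabet `{1, …, n}`. -/
def NWord (n : ℕ) : Type := {l : List ℕ // l.Nodup ∧ ∀ x ∈ l, 1 ≤ x ∧ x ≤ n}

/-- Deletion of the letter `n` from an injective word over `{1, …, n}`. -/
def delTop (n : ℕ) (w : NWord n) : NWord (n - 1) :=
  ⟨w.val.erase n, by
    obtain ⟨hnd, hmem⟩ := w.prop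
    refine ⟨hnd.erase n, fun x hx => ?_⟩
    rw [hnd.mem_erase_iff] at hx
    have := hmem x hx.2
    omega⟩

/-- The map `f : I_n → I_{n-1} × {0,1}`, sending `w` to `(π(w), 0)` if the
letter `n` does not occur in `w` and to `(π(w), 1)` otherwise, where `π`
deletes the letter `n`. -/
def injMap (n : ℕ) (w : NWord n) : NWord (n - 1) × Bool :=
  (delTop n w, decide (n ∈ w.val))

/-- The map `f : I_n → I_{n-1} × {0,1}` is a surjective, rank-preserving,
order-preserving map of posets, where `I_n` carries the subword order graded
by length, `{0,1}` is the chain `false < true`, and the product is ordered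
componentwise and graded by length plus the second coordinate. -/
theorem stmt_13 {n : ℕ} (hn : 2 ≤ n) :
    Function.Surjective (injMap n) ∧
    (∀ w : NWord n,
      (injMap n w).1.val.length + ((injMap n w).2).toNat = w.val.length) ∧
    (∀ u v : NWord n, u.val.Sublist v.val →
      (injMap n u).1.val.Sublist (injMap n v).1.val ∧
        (injMap n u).2 ≤ (injMap n v).2) := by
  refine ⟨?_, ?_, ?_⟩
  · rintro ⟨w, b⟩
    have hnot : n ∉ w.val := fun h => by have := w.prop.2 n h; omega
    cases b with
    | false =>
      refine ⟨⟨w.val, w.prop.1, fun x hx => by have := w.prop.2 x hx; omega⟩, ?_⟩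
      simp [injMap, delTop, List.erase_of_not_mem hnot, hnot]
      rfl
    | true =>
      refine ⟨⟨n :: w.val, by simp [w.prop.1, hnot],
        fun x hx => by
          rcases List.mem_cons.1 hx with h | h
          · omega
          · have := w.prop.2 x h; omega⟩, ?_⟩
      simp [injMap, delTop]
      rfl
  · intro w
    by_cases h : n ∈ w.val
    · have := List.length_erase_of_mem h
      simp only [injMap, delTop, this]
      rw [decide_eq_true h]
      simp only [Bool.toNat_true]
      have : 0 < w.val.length := List.length_pos_iff.2 (fun he => by simp [he] at h)
      omega
    · simp [injMap, delTop, List.erase_of_not_mem h, h]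
  · intro u v huv
    constructor
    · exact huv.erase n
    · simp only [injMap]
      have : n ∈ u.val → n ∈ v.val := fun h => huv.mem h
      by_cases h : n ∈ u.val
      · simp [h, this h]
      · simp [h]
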